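/- Let (X,d) be a dissimilarity space that is conical with apex p (d(p,x) = δ > 0 for all x ∈ X \ {p}), let X' = X \ {p}, let <' be a compatible order of (X',d), and let (y,z) be a pair of consecutive elements of <' with y <' z. Define the total order <_{(y,z)} on X by inserting p between y and z (it agrees with <' on X', and u <_{(y,z)} p for all u ≤' y while p <_{(y,z)} v for all v ≥' z). Then <_{(y,z)} is a compatible order of (X,d) if and only if for all u, v ∈ X' with u <' v the following two conditions hold: (1) if u ≤' y and z ≤' v, then d(u,v) ≥ δ; (2) if v ≤' y or z ≤' u, then d(u,v) ≤ δ. -/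

import Mathlib

def IsCompatible {X : Type*} (d : X → X → ℝ) (lt : X → X → Prop) : Prop :=
  ∀ x y z : X, lt x y → lt y z → max (d x y) (d y z) ≤ d x z

/-- The total order `<_{(y,z)}` on `X` obtained from a total order `lt'` on
`X' = X \ {p}` by inserting `p` in the hole between `y` and its successor `z`:
`u < p` for all `u ≤' y` and `p < v` for all `v` with `y <' v` (i.e. `z ≤' v`). -/
def insertOrder {X : Type*} (p : X)
    (lt' : {x : X // x ≠ p} → {x : X // x ≠ p} → Prop)
    (y : {x : X // x ≠ p}) : X → X → Prop :=
  fun u v =>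
    (∃ hv : v ≠ p, u = p ∧ lt' y ⟨v, hv⟩) ∨
    (∃ hu : u ≠ p, v = p ∧ ¬ lt' y ⟨u, hu⟩) ∨
    (∃ hu : u ≠ p, ∃ hv : v ≠ p, lt' ⟨u, hu⟩ ⟨v, hv⟩)

/-- in a conical space with apex `p`, given a compatible order `<'` of
`X' = X \ {p}` and a pair `(y,z)` of consecutive elements of `<'`, inserting `p`
between `y` and `z` yields a compatible order of `(X,d)` iff for all `u <' v`
(1) `u ≤' y` and `z ≤' v` imply `d(u,v) ≥ δ`, and
(2) `v ≤' y` or `z ≤' u` imply `d(u,v) ≤ δ`. -/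
theorem insert_apex_admissible_iff {X : Type*} [Fintype X] (d : X → X → ℝ)
    (hsymm : ∀ x y : X, d x y = d y x)
    (hnonneg : ∀ x y : X, 0 ≤ d x y)
    (hself : ∀ x : X, d x x = 0)
    (p : X) (δ : ℝ) (hδpos : 0 < δ)
    (hconical : ∀ x : X, x ≠ p → d p x = δ)
    (lt' : {x : X // x ≠ p} → {x : X // x ≠ p} → Prop)
    (hsto : IsStrictTotalOrder {x : X // x ≠ p} lt')
    (hcomp : ∀ u v w : {x : X // x ≠ p}, lt' u v → lt' v w →
      max (d u.1 v.1) (d v.1 w.1) ≤ d u.1 w.1)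
    (y z : {x : X // x ≠ p}) (hyz : lt' y z)
    (hconsec : ∀ w : {x : X // x ≠ p}, ¬ (lt' y w ∧ lt' w z)) :
    IsCompatible d (insertOrder p lt' y) ↔
      ((∀ u v : {x : X // x ≠ p}, lt' u v → ¬ lt' y u → ¬ lt' v z → δ ≤ d u.1 v.1) ∧
       (∀ u v : {x : X // x ≠ p}, lt' u v → (¬ lt' y v ∨ ¬ lt' u z) → d u.1 v.1 ≤ δ)) := by
  have htrans : ∀ a b c, lt' a b → lt' b c → lt' a c := fun a b c => hsto.trans a b c
  have hirr : ∀ a, ¬ lt' a a := hsto.irrefl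
  have htri : ∀ a b, lt' a b ∨ a = b ∨ lt' b a := fun a b => by
    by_cases h1 : lt' a b
    · exact Or.inl h1
    by_cases h2 : lt' b a
    · exact Or.inr (Or.inr h2)
    exact Or.inr (Or.inl (hsto.trichotomous a b h1 h2))
  -- lt' y v ↔ ¬ lt' v z
  have hkey : ∀ v : {x : X // x ≠ p}, lt' y v ↔ ¬ lt' v z := by
    intro v
    constructor
    · intro h hvz; exact hconsec v ⟨h, hvz⟩
    · intro h
      rcases htri v z with h1 | h1 | h1
      · exact absurd h1 h
      · exact h1 ▸ hyz
      · exact htrans _ _ _ hyz h1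
  have hdp : ∀ v : {x : X // x ≠ p}, d v.1 p = δ := fun v =>
    (hsymm v.1 p).trans (hconical v.1 v.2)
  constructor
  · intro hC
    constructor
    · intro u v huv hyu hvz
      have h1 : insertOrder p lt' y u.1 p := Or.inr (Or.inl ⟨u.2, rfl, hyu⟩)
      have h2 : insertOrder p lt' y p v.1 :=
        Or.inl ⟨v.2, rfl, (hkey v).mpr hvz⟩
      have := hC u.1 p v.1 h1 h2
      calc δ = d u.1 p := (hdp u).symm
        _ ≤ max (d u.1 p) (d p v.1) := le_max_left _ _
        _ ≤ d u.1 v.1 := this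
    · intro u v huv hcase
      rcases hcase with hyv | huz
      · have h1 : insertOrder p lt' y u.1 v.1 := Or.inr (Or.inr ⟨u.2, v.2, huv⟩)
        have h2 : insertOrder p lt' y v.1 p := Or.inr (Or.inl ⟨v.2, rfl, hyv⟩)
        have := hC u.1 v.1 p h1 h2
        calc d u.1 v.1 ≤ max (d u.1 v.1) (d v.1 p) := le_max_left _ _
          _ ≤ d u.1 p := this
          _ = δ := hdp u
      · have hyu : lt' y u := (hkey u).mpr huz
        have h1 : insertOrder p lt' y p u.1 := Or.inl ⟨u.2, rfl, hyu⟩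
        have h2 : insertOrder p lt' y u.1 v.1 := Or.inr (Or.inr ⟨u.2, v.2, huv⟩)
        have := hC p u.1 v.1 h1 h2
        calc d u.1 v.1 ≤ max (d p u.1) (d u.1 v.1) := le_max_right _ _
          _ ≤ d p v.1 := this
          _ = δ := hconical v.1 v.2
  · rintro ⟨H1, H2⟩ a b c hab hbc
    rcases hab with ⟨hb, rfl, hyb⟩ | ⟨ha, rfl, hya⟩ | ⟨ha, hb, hab'⟩
    · -- a = p, lt' y b
      rcases hbc with ⟨hc, hbp, _⟩ | ⟨hb', rfl, hyb'⟩ | ⟨hb', hc, hbc'⟩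
      · exact absurd hbp hb
      · exact absurd hyb hyb'
      · -- p < b < c, show max (d p b) (d b c) ≤ d p c
        have hyc : lt' y ⟨c, hc⟩ := htrans _ _ _ hyb hbc'
        rw [hconical b hb, hconical c hc]
        have : d b c ≤ δ := H2 ⟨b, hb⟩ ⟨c, hc⟩ hbc' (Or.inr ((hkey _).mp hyb))
        simpa using this
    · -- b = p, ¬ lt' y a
      rcases hbc with ⟨hc, _, hyc⟩ | ⟨hb', hpp, _⟩ | ⟨hb', _, _⟩
      · -- a < p < c : show max (d a p) (d p c) ≤ d a c
        have hac : lt' ⟨a, ha⟩ ⟨c, hc⟩ := by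
          rcases htri ⟨a, ha⟩ ⟨c, hc⟩ with h | h | h
          · exact h
          · exact absurd (h ▸ hyc) hya
          · exact absurd (htrans _ _ _ hyc h) hya
        have := H1 ⟨a, ha⟩ ⟨c, hc⟩ hac hya ((hkey _).mp hyc)
        rw [hdp ⟨a, ha⟩, hconical c hc]
        simpa using this
      · exact absurd rfl hb'
      · exact absurd rfl hb'
    · rcases hbc with ⟨hc, hbp, _⟩ | ⟨hb', rfl, hyb'⟩ | ⟨hb', hc, hbc'⟩
      · exact absurd hbp hb
      · -- a < b < p : show max (d a b) (d b p) ≤ d a p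
        have hya : ¬ lt' y ⟨a, ha⟩ := fun h => hyb' (htrans _ _ _ h hab')
        have := H2 ⟨a, ha⟩ ⟨b, hb⟩ hab' (Or.inl hyb')
        rw [hdp ⟨a, ha⟩, hdp ⟨b, hb⟩]
        simpa using this
      · exact hcomp ⟨a, ha⟩ ⟨b, hb⟩ ⟨c, hc⟩ hab' hbc'
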